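/- arXiv:1812.00183 — 2 statements merged into one kernel-verified Lean document; each statement's English description precedes it below -/
import Mathlib

section
/- Counter abstraction is a bisimulation: let A = (S, δ, I, F) be an SPS over Γ₀ = {u₁, …, u_k}, and define the abstraction map π(s, C) = (s, (m₁, …, m_k)) ∈ S × ℕᵏ where m_i = |{a ∈ C | λ(a) = u_i}|. Then (1) if (s, C) →r (s', C') is a configuration transition, then (s, r, s') ∈ δ and π(s', C') is obtained from π(s, C) by incrementing the i-th counter when r = req_{u_i}, decrementing the i-th counter (which is strictly positive) when r = ans_{u_i}, and leaving the counters unchanged when r = τ; and (2) conversely, if (s, r, s') ∈ δ and the counter vector of π(s, C) can perform the corresponding counter update (in particular m_i > 0 when r = ans_{u_i}), then there exists a (unique) finite set C' ⊆ CN with (s, C) →r (s', C'). Consequently, L(A) equals the language of the induced k-counter automaton without zero-tests with state set S, initial states I and final states F. -/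
/-!
Fixed data: a finite service alphabet `T` (= Γ₀) of client types; client names
`CN T = T × ℕ`, where `(u, n)` is the `n`-th client of type `u` (so the typing map
λ is the first projection, each fiber `CN_u` is countably infinite, and the fixed
enumeration of `CN_u` is given by the natural-number index).
-/

/-- The extended alphabet Γ = {req_u, ans_u | u ∈ Γ₀} ∪ {τ}. -/
inductive Act (T : Type) : Type
  | req : T → Act T
  | ans : T → Act T
  | tau : Act T
  deriving DecidableEq

/-- Client names: `(u, n)` is the `n`-th client of type `u`; `λ = Prod.fst`. -/
abbrev CN (T : Type) := T × ℕ

/-- A Service for Passive Clients: a finite set of states `S`, a transition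
relation `δ ⊆ S × Γ × S`, initial states `I` and final states `F`. -/
structure SPS (T S : Type) where
  delta : S → Act T → S → Prop
  init : Set S
  final : Set S

namespace SPS

variable {T S : Type}

/-- The extended transition relation on configurations `(s, C)`:
`(s, C) →r (s', C')` iff `(s, r, s') ∈ δ` and
* if `r = τ` then `C' = C`;
* if `r = req_u` then `C' = C ∪ {a}` where `a` is the least element of `CN_u \ C`;
* if `r = ans_u` then `X = {a ∈ C | λ a = u}` is nonempty and `C' = C \ {a}`
  where `a` is the least element of `X`. -/
def CStep (A : SPS T S) : S × Set (CN T) → Act T → S × Set (CN T) → Prop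
  | (s, C), r, (s', C') =>
    A.delta s r s' ∧
      match r with
      | .tau => C' = C
      | .req u => C' = insert (u, sInf {n : ℕ | (u, n) ∉ C}) C
      | .ans u => {n : ℕ | (u, n) ∈ C}.Nonempty ∧
          C' = C \ {(u, sInf {n : ℕ | (u, n) ∈ C})}

/-- `A.Reaches c w c'` iff there is a run of `A` on the word `w` that starts in the
configuration `c` and ends in the configuration `c'`. -/
inductive Reaches (A : SPS T S) : S × Set (CN T) → List (Act T) → S × Set (CN T) → Prop
  | refl (c) : Reaches A c [] c
  | step {c c' c'' : S × Set (CN T)} {r : Act T} {w : List (Act T)} :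
      A.CStep c r c' → Reaches A c' w c'' → Reaches A c (r :: w) c''

/-- The language of `A`: all words `w ∈ Γ*` on which `A` has a run from an initial
configuration (initial state, empty client set) to a configuration whose state is final. -/
def Lang (A : SPS T S) : Set (List (Act T)) :=
  {w | ∃ s ∈ A.init, ∃ c : S × Set (CN T), A.Reaches (s, ∅) w c ∧ c.1 ∈ A.final}

end SPS


namespace SPS

variable {T S : Type}

/-- The counter abstraction map `π(s, C) = (s, (m_u)_{u ∈ Γ₀})`, where
`m_u = |{a ∈ C | λ a = u}|` (counters are indexed by the finitely many client types). -/
noncomputable def absMap (c : S × Set (CN T)) : S × (T → ℕ) :=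
  (c.1, fun u => {a ∈ c.2 | a.1 = u}.ncard)

/-- A step of the induced multi-counter automaton without zero-tests:
`(s, v) →r (s', v')` iff `(s, r, s') ∈ δ` and `v' = v + e_u` when `r = req_u`,
`v' = v - e_u` with `v u > 0` when `r = ans_u`, and `v' = v` when `r = τ`. -/
def CounterStep [DecidableEq T] (A : SPS T S) :
    S × (T → ℕ) → Act T → S × (T → ℕ) → Prop
  | (s, v), r, (s', v') =>
    A.delta s r s' ∧
      match r with
      | .tau => v' = v
      | .req u => v' = Function.update v u (v u + 1)
      | .ans u => 0 < v u ∧ v' = Function.update v u (v u - 1)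

/-- Multistep of the induced counter automaton. -/
inductive CReaches [DecidableEq T] (A : SPS T S) :
    S × (T → ℕ) → List (Act T) → S × (T → ℕ) → Prop
  | refl (c) : CReaches A c [] c
  | step {c c' c'' : S × (T → ℕ)} {r : Act T} {w : List (Act T)} :
      A.CounterStep c r c' → CReaches A c' w c'' → CReaches A c (r :: w) c''

/-- The language of the induced multi-counter automaton without zero-tests: words
labelling a path from an initial configuration `(s, 0)`, `s ∈ I`, to a configuration
whose state is final. -/
def CounterLang [DecidableEq T] (A : SPS T S) : Set (List (Act T)) :=
  {w | ∃ s ∈ A.init, ∃ c : S × (T → ℕ), A.CReaches (s, fun _ => 0) w c ∧ c.1 ∈ A.final}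

end SPS

section Aux

open SPS

variable {T S : Type} [DecidableEq T]

/-- The counter vector of a client set. -/
noncomputable def cnt (C : Set (CN T)) : T → ℕ := fun u => {a ∈ C | a.1 = u}.ncard

lemma absMap_eq (s : S) (C : Set (CN T)) : SPS.absMap (s, C) = (s, cnt C) := rfl

lemma fiber_finite {C : Set (CN T)} (hC : C.Finite) (u : T) :
    {n : ℕ | (u, n) ∈ C}.Finite := by
  have h : {n : ℕ | (u, n) ∈ C} = (fun n => (u, n)) ⁻¹' C := rfl
  rw [h]
  exact hC.preimage (fun a _ b _ h => by simpa using h)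

lemma req_fresh {C : Set (CN T)} (hC : C.Finite) (u : T) :
    (u, sInf {n : ℕ | (u, n) ∉ C}) ∉ C := by
  have hne : {n : ℕ | (u, n) ∉ C}.Nonempty := by
    have h2 : ({n : ℕ | (u, n) ∈ C}ᶜ).Infinite := (fiber_finite hC u).infinite_compl
    exact h2.nonempty
  exact Nat.sInf_mem hne

lemma sep_finite {C : Set (CN T)} (hC : C.Finite) (u : T) :
    {a ∈ C | a.1 = u}.Finite := hC.subset (fun a ha => ha.1)

lemma cnt_insert {C : Set (CN T)} (hC : C.Finite) {u : T} {n : ℕ} (hn : (u, n) ∉ C) :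
    cnt (insert (u, n) C) = Function.update (cnt C) u (cnt C u + 1) := by
  funext u'
  rcases eq_or_ne u' u with rfl | h
  · rw [Function.update_self]
    have hset : {a ∈ insert (u', n) C | a.1 = u'} = insert (u', n) {a ∈ C | a.1 = u'} := by
      ext a
      simp only [Set.mem_insert_iff, Set.mem_setOf_eq]
      constructor
      · rintro ⟨h1 | h1, h2⟩
        · exact Or.inl h1
        · exact Or.inr ⟨h1, h2⟩
      · rintro (rfl | ⟨h1, h2⟩)
        · exact ⟨Or.inl rfl, rfl⟩
        · exact ⟨Or.inr h1, h2⟩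
    have hnm : (u', n) ∉ {a ∈ C | a.1 = u'} := fun h => hn h.1
    simp only [cnt, hset]
    exact Set.ncard_insert_of_notMem hnm (sep_finite hC u')
  · rw [Function.update_of_ne h]
    have hset : {a ∈ insert (u, n) C | a.1 = u'} = {a ∈ C | a.1 = u'} := by
      ext a
      simp only [Set.mem_insert_iff, Set.mem_setOf_eq]
      constructor
      · rintro ⟨h1 | h1, h2⟩
        · subst h1; exact absurd h2.symm h
        · exact ⟨h1, h2⟩
      · rintro ⟨h1, h2⟩; exact ⟨Or.inr h1, h2⟩
    simp only [cnt, hset]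

lemma cnt_diff {C : Set (CN T)} (hC : C.Finite) {u : T} {n : ℕ} (hn : (u, n) ∈ C) :
    cnt (C \ {(u, n)}) = Function.update (cnt C) u (cnt C u - 1) := by
  funext u'
  rcases eq_or_ne u' u with rfl | h
  · rw [Function.update_self]
    have hset : {a ∈ C \ {(u', n)} | a.1 = u'} = {a ∈ C | a.1 = u'} \ {(u', n)} := by
      ext a
      simp only [Set.mem_diff, Set.mem_setOf_eq, Set.mem_singleton_iff]
      tauto
    have hm : (u', n) ∈ {a ∈ C | a.1 = u'} := ⟨hn, rfl⟩
    simp only [cnt, hset]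
    exact Set.ncard_diff_singleton_of_mem hm
  · rw [Function.update_of_ne h]
    have hset : {a ∈ C \ {(u, n)} | a.1 = u'} = {a ∈ C | a.1 = u'} := by
      ext a
      simp only [Set.mem_diff, Set.mem_setOf_eq, Set.mem_singleton_iff]
      constructor
      · rintro ⟨⟨h1, _⟩, h2⟩; exact ⟨h1, h2⟩
      · rintro ⟨h1, h2⟩
        refine ⟨⟨h1, fun hh => ?_⟩, h2⟩
        subst hh; exact h h2.symm  -- a = (u,n), a.1 = u' gives u = u'
    simp only [cnt, hset]

lemma cnt_pos_iff {C : Set (CN T)} (hC : C.Finite) (u : T) :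
    0 < cnt C u ↔ {n : ℕ | (u, n) ∈ C}.Nonempty := by
  rw [cnt, Set.ncard_pos (sep_finite hC u)]
  constructor
  · rintro ⟨a, ha, hu⟩
    exact ⟨a.2, by rw [← hu]; exact ha⟩
  · rintro ⟨n, hn⟩
    exact ⟨(u, n), hn, rfl⟩

variable {A : SPS T S}

lemma step_forward {s s' : S} {C C' : Set (CN T)} {r : Act T} (hC : C.Finite)
    (h : A.CStep (s, C) r (s', C')) :
    C'.Finite ∧ A.CounterStep (s, cnt C) r (s', cnt C') := by
  obtain ⟨hd, hm⟩ := h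
  cases r with
  | tau => subst hm; exact ⟨hC, hd, rfl⟩
  | req u =>
    subst hm
    refine ⟨hC.insert _, hd, ?_⟩
    exact cnt_insert hC (req_fresh hC u)
  | ans u =>
    obtain ⟨hne, rfl⟩ := hm
    have hmem : (u, sInf {n : ℕ | (u, n) ∈ C}) ∈ C := Nat.sInf_mem hne
    refine ⟨hC.diff, hd, (cnt_pos_iff hC u).mpr hne, cnt_diff hC hmem⟩

lemma step_backward {s s' : S} {C : Set (CN T)} {r : Act T} {v' : T → ℕ} (hC : C.Finite)
    (h : A.CounterStep (s, cnt C) r (s', v')) :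
    ∃ C' : Set (CN T), A.CStep (s, C) r (s', C') ∧ C'.Finite ∧ cnt C' = v' := by
  obtain ⟨hd, hm⟩ := h
  cases r with
  | tau => exact ⟨C, ⟨hd, rfl⟩, hC, hm.symm⟩
  | req u =>
    refine ⟨insert (u, sInf {n : ℕ | (u, n) ∉ C}) C, ⟨hd, rfl⟩, hC.insert _, ?_⟩
    rw [cnt_insert hC (req_fresh hC u), hm]
  | ans u =>
    obtain ⟨hpos, hv⟩ := hm
    have hne : {n : ℕ | (u, n) ∈ C}.Nonempty := (cnt_pos_iff hC u).mp hpos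
    have hmem : (u, sInf {n : ℕ | (u, n) ∈ C}) ∈ C := Nat.sInf_mem hne
    exact ⟨C \ {(u, sInf {n : ℕ | (u, n) ∈ C})}, ⟨hd, hne, rfl⟩, hC.diff,
      by rw [cnt_diff hC hmem, hv]⟩

lemma reaches_forward {c c' : S × Set (CN T)} {w : List (Act T)}
    (h : A.Reaches c w c') (hC : c.2.Finite) :
    c'.2.Finite ∧ A.CReaches (c.1, cnt c.2) w (c'.1, cnt c'.2) := by
  induction h with
  | refl c => exact ⟨hC, .refl _⟩
  | @step c c' c'' r w h1 h2 ih =>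
    obtain ⟨s, C⟩ := c
    obtain ⟨s', C'⟩ := c'
    obtain ⟨hfin, hcs⟩ := step_forward hC h1
    obtain ⟨hfin', hcr⟩ := ih hfin
    exact ⟨hfin', .step hcs hcr⟩

lemma reaches_backward : ∀ {w : List (Act T)} {s : S} {C : Set (CN T)} {d : S × (T → ℕ)},
    C.Finite → A.CReaches (s, cnt C) w d →
    ∃ c' : S × Set (CN T), A.Reaches (s, C) w c' ∧ c'.2.Finite ∧ (c'.1, cnt c'.2) = d := by
  intro w
  induction w with
  | nil =>
    intro s C d hC hd
    cases hd
    exact ⟨(s, C), .refl _, hC, rfl⟩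
  | cons r w ih =>
    intro s C d hC hd
    cases hd with
    | @step _ c' _ _ _ h1 h2 =>
      obtain ⟨s', v'⟩ := c'
      obtain ⟨C', hstep, hfin, hcnt⟩ := step_backward hC h1
      rw [← hcnt] at h2
      obtain ⟨c'', hr, hfin'', heq⟩ := ih hfin h2
      exact ⟨c'', .step hstep hr, hfin'', heq⟩

lemma cnt_empty : cnt (∅ : Set (CN T)) = fun _ => 0 := by
  funext u
  have : {a ∈ (∅ : Set (CN T)) | a.1 = u} = ∅ := by
    ext a; simp
  simp [cnt, this]

end Aux

/-- **Counter abstraction is a bisimulation.**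
(1) Every configuration step `(s, C) →r (s', C')` projects under `π = absMap` to a step
of the induced counter automaton (in particular `(s, r, s') ∈ δ`, and the counters are
updated by incrementing on `req`, decrementing a strictly positive counter on `ans`,
and are unchanged on `τ`); (2) conversely, if `(s, r, s') ∈ δ` and the counter vector
of `π(s, C)` can perform the corresponding counter update, then there is a unique
finite `C'` with `(s, C) →r (s', C')`.  Consequently `L(A)` equals the language of the
induced multi-counter automaton without zero-tests. -/
theorem sps_counter_abstraction {T S : Type} [Fintype T] [DecidableEq T] [Fintype S]
    (A : SPS T S) :
    (∀ (s s' : S) (C C' : Set (CN T)) (r : Act T), C.Finite →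
        A.CStep (s, C) r (s', C') →
          A.delta s r s' ∧ A.CounterStep (SPS.absMap (s, C)) r (SPS.absMap (s', C'))) ∧
    (∀ (s s' : S) (C : Set (CN T)) (r : Act T), C.Finite →
        A.delta s r s' →
        (∃ v', A.CounterStep (SPS.absMap (s, C)) r (s', v')) →
        ∃! C' : Set (CN T), A.CStep (s, C) r (s', C')) ∧
    A.Lang = A.CounterLang := by
  refine ⟨?_, ?_, ?_⟩
  · intro s s' C C' r hC h
    obtain ⟨hfin, hcs⟩ := step_forward hC h
    exact ⟨h.1, hcs⟩
  · intro s s' C r hC hd ⟨v', hv'⟩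
    obtain ⟨C', hstep, hfin, hcnt⟩ := step_backward hC hv'
    refine ⟨C', hstep, ?_⟩
    intro C'' h''
    obtain ⟨_, hm''⟩ := h''
    obtain ⟨_, hm'⟩ := hstep
    cases r with
    | tau => rw [hm'', hm']
    | req u => rw [hm'', hm']
    | ans u => rw [hm''.2, hm'.2]
  · ext w
    constructor
    · rintro ⟨s, hs, c, hr, hf⟩
      obtain ⟨hfin, hcr⟩ := reaches_forward hr (Set.finite_empty)
      rw [cnt_empty] at hcr
      exact ⟨s, hs, (c.1, cnt c.2), hcr, hf⟩
    · rintro ⟨s, hs, d, hr, hf⟩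
      rw [← cnt_empty] at hr
      obtain ⟨c', hr', hfin', heq⟩ := reaches_backward Set.finite_empty hr
      refine ⟨s, hs, c', hr', ?_⟩
      have : c'.1 = d.1 := congrArg Prod.fst heq
      rw [this]; exact hf
end

section
/- Threshold indistinguishability for monadic first-order logic with two unary predicates: let L be the first-order language (with equality) whose signature consists of exactly two unary relation symbols p and q, and let 𝔄 and 𝔅 be two L-structures with nonempty finite domains. For a structure 𝔐, write R₁(𝔐) = {a | p(a) ∧ q(a)}, R₂(𝔐) = {a | p(a) ∧ ¬q(a)}, R₃(𝔐) = {a | ¬p(a) ∧ q(a)}, R₄(𝔐) = {a | ¬p(a) ∧ ¬q(a)} for the four atomic-type regions. If for some r ∈ ℕ and every i ∈ {1,2,3,4} one has min(|R_i(𝔄)|, r) = min(|R_i(𝔅)|, r), then 𝔄 and 𝔅 satisfy exactly the same L-sentences of quantifier rank at most r. -/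
open FirstOrder FirstOrder.Language

/-- The two unary relation symbols `p` and `q`. -/
inductive PQSym : Type
  | p
  | q
  deriving DecidableEq

/-- The first-order language (with equality) whose signature consists of exactly two
unary relation symbols `p` and `q` (and no function symbols). -/
def Lpq : FirstOrder.Language where
  Functions := fun _ => Empty
  Relations := fun n => match n with
    | 1 => PQSym
    | _ => Empty

/-- The `Lpq`-structure on a domain `M` in which `p` is interpreted by `P` and `q`
is interpreted by `Q`. -/
def pqStructure {M : Type*} (P Q : Set M) : Lpq.Structure M where
  funMap := fun {_n} f _ => (f : Empty).elim
  RelMap := fun {n} r x =>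
    match n, r with
    | 1, PQSym.p => x 0 ∈ P
    | 1, PQSym.q => x 0 ∈ Q

/-- The quantifier rank of a (bounded) formula: the maximal nesting depth of
quantifiers occurring in it. -/
def qrank : ∀ {n : ℕ}, Lpq.BoundedFormula Empty n → ℕ
  | _, .falsum => 0
  | _, .equal _ _ => 0
  | _, .rel _ _ => 0
  | _, .imp f g => max (qrank f) (qrank g)
  | _, .all f => qrank f + 1

open FirstOrder FirstOrder.Language

section Aux

/-- Atomic-type region determined by two truth values. -/
def Rset {M : Type} (P Q : Set M) (S T : Prop) : Set M :=
  {x | (x ∈ P ↔ S) ∧ (x ∈ Q ↔ T)}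

lemma range_snoc' {M : Type} {n : ℕ} (a : Fin n → M) (x : M) :
    Set.range (Fin.snoc a x : Fin (n+1) → M) = insert x (Set.range a) := by
  ext y
  constructor
  · rintro ⟨i, rfl⟩
    refine Fin.lastCases ?_ ?_ i
    · simp
    · intro j; simp
  · rintro (rfl | ⟨i, rfl⟩)
    · exact ⟨Fin.last n, by simp⟩
    · exact ⟨i.castSucc, by simp⟩

/-- every `Lpq`-term is a variable -/
def termVar : ∀ {α : Type}, Lpq.Term α → α
  | _, .var v => v
  | _, .func f _ => (f : Empty).elim

lemma realize_termVar {α M : Type} (P Q : Set M) (t : Lpq.Term α) (e : α → M) :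
    @Term.realize Lpq M (pqStructure P Q) α e t = e (termVar t) := by
  cases t with
  | var v => rfl
  | func f ts => exact (f : Empty).elim

/-- Extension (back-and-forth) step. -/
lemma extend_step {A B : Type} [Fintype A] [Fintype B]
    (PA QA : Set A) (PB QB : Set B) (k n : ℕ)
    (a : Fin n → A) (b : Fin n → B)
    (hpat : ∀ i j, a i = a j ↔ b i = b j)
    (hty : ∀ i, (a i ∈ PA ↔ b i ∈ PB) ∧ (a i ∈ QA ↔ b i ∈ QB))
    (hcnt : ∀ S T : Prop, min ((Rset PA QA S T \ Set.range a).ncard) (k+1)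
      = min ((Rset PB QB S T \ Set.range b).ncard) (k+1))
    (a' : A) :
    ∃ b' : B,
      (∀ i j, (Fin.snoc a a' : Fin (n+1) → A) i = (Fin.snoc a a' : Fin (n+1) → A) j
         ↔ (Fin.snoc b b' : Fin (n+1) → B) i = (Fin.snoc b b' : Fin (n+1) → B) j) ∧
      (∀ i, ((Fin.snoc a a' : Fin (n+1) → A) i ∈ PA ↔ (Fin.snoc b b' : Fin (n+1) → B) i ∈ PB) ∧
            ((Fin.snoc a a' : Fin (n+1) → A) i ∈ QA ↔ (Fin.snoc b b' : Fin (n+1) → B) i ∈ QB)) ∧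
      (∀ S T : Prop, min ((Rset PA QA S T \ Set.range (Fin.snoc a a' : Fin (n+1) → A)).ncard) k
        = min ((Rset PB QB S T \ Set.range (Fin.snoc b b' : Fin (n+1) → B)).ncard) k) := by
  classical
  by_cases hmem : a' ∈ Set.range a
  · obtain ⟨i0, hi0⟩ := hmem
    refine ⟨b i0, ?_, ?_, ?_⟩
    all_goals
      have hA : ∀ i, (Fin.snoc a a' : Fin (n+1) → A) i
          = a (Fin.lastCases i0 (fun t => t) i) := by
        intro i
        refine Fin.lastCases ?_ ?_ i
        · simp [← hi0]
        · intro j; simp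
      have hB : ∀ i, (Fin.snoc b (b i0) : Fin (n+1) → B) i
          = b (Fin.lastCases i0 (fun t => t) i) := by
        intro i
        refine Fin.lastCases ?_ ?_ i
        · simp
        · intro j; simp
    · intro i j
      rw [hA i, hA j, hB i, hB j]
      exact hpat _ _
    · intro i
      rw [hA i, hB i]
      exact hty _
    · intro S T
      have hra : Set.range (Fin.snoc a a' : Fin (n+1) → A) = Set.range a := by
        rw [range_snoc', Set.insert_eq_self]; exact ⟨i0, hi0⟩
      have hrb : Set.range (Fin.snoc b (b i0) : Fin (n+1) → B) = Set.range b := by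
        rw [range_snoc', Set.insert_eq_self]; exact ⟨i0, rfl⟩
      rw [hra, hrb]
      have := hcnt S T
      omega
  · -- a' is new
    have ha' : a' ∈ Rset PA QA (a' ∈ PA) (a' ∈ QA) \ Set.range a :=
      ⟨⟨Iff.rfl, Iff.rfl⟩, hmem⟩
    have hApos : 1 ≤ (Rset PA QA (a' ∈ PA) (a' ∈ QA) \ Set.range a).ncard := by
      rw [Nat.one_le_iff_ne_zero]
      exact fun h => (Set.eq_empty_iff_forall_notMem.mp
        ((Set.ncard_eq_zero (Set.toFinite _)).mp h)) a' ha'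
    have hBpos : 1 ≤ (Rset PB QB (a' ∈ PA) (a' ∈ QA) \ Set.range b).ncard := by
      have := hcnt (a' ∈ PA) (a' ∈ QA); omega
    obtain ⟨b', hb'⟩ := Set.nonempty_of_ncard_ne_zero (by omega :
      (Rset PB QB (a' ∈ PA) (a' ∈ QA) \ Set.range b).ncard ≠ 0)
    obtain ⟨⟨hbP, hbQ⟩, hbnew⟩ := hb'
    refine ⟨b', ?_, ?_, ?_⟩
    · intro i j
      refine Fin.lastCases ?_ ?_ i <;> [skip; intro i'] <;>
        (refine Fin.lastCases ?_ ?_ j <;> [skip; intro j'] <;>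
          simp only [Fin.snoc_last, Fin.snoc_castSucc])
      · constructor
        · intro h; exact absurd ⟨j', h.symm⟩ hmem
        · intro h; exact absurd ⟨j', h.symm⟩ hbnew
      · constructor
        · intro h; exact absurd ⟨i', h⟩ hmem
        · intro h; exact absurd ⟨i', h⟩ hbnew
      · exact hpat i' j'
    · intro i
      refine Fin.lastCases ?_ ?_ i
      · simp only [Fin.snoc_last]; exact ⟨hbP.symm, hbQ.symm⟩
      · intro i'
        simp only [Fin.snoc_castSucc]
        exact hty i'
    · intro S T
      rw [range_snoc', range_snoc']
      have hda : Rset PA QA S T \ insert a' (Set.range a)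
          = (Rset PA QA S T \ Set.range a) \ {a'} := by
        rw [Set.insert_eq, Set.union_comm, ← Set.diff_diff]
      have hdb : Rset PB QB S T \ insert b' (Set.range b)
          = (Rset PB QB S T \ Set.range b) \ {b'} := by
        rw [Set.insert_eq, Set.union_comm, ← Set.diff_diff]
      rw [hda, hdb]
      by_cases hin : a' ∈ Rset PA QA S T
      · obtain ⟨hS, hT⟩ := hin
        have hbin : b' ∈ Rset PB QB S T := ⟨hbP.trans hS, hbQ.trans hT⟩
        have hST : Rset PA QA S T = Rset PA QA (a' ∈ PA) (a' ∈ QA) :=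
          Set.ext fun x => ⟨fun h => ⟨h.1.trans hS.symm, h.2.trans hT.symm⟩,
            fun h => ⟨h.1.trans hS, h.2.trans hT⟩⟩
        have hSTB : Rset PB QB S T = Rset PB QB (a' ∈ PA) (a' ∈ QA) :=
          Set.ext fun x => ⟨fun h => ⟨h.1.trans hS.symm, h.2.trans hT.symm⟩,
            fun h => ⟨h.1.trans hS, h.2.trans hT⟩⟩
        have hma : a' ∈ Rset PA QA S T \ Set.range a := ⟨⟨hS, hT⟩, hmem⟩
        have hmb : b' ∈ Rset PB QB S T \ Set.range b := ⟨hbin, hbnew⟩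
        rw [Set.ncard_diff_singleton_of_mem hma,
            Set.ncard_diff_singleton_of_mem hmb]
        have h1 := hcnt S T
        have h2 : 1 ≤ (Rset PA QA S T \ Set.range a).ncard := by rw [hST]; exact hApos
        have h3 : 1 ≤ (Rset PB QB S T \ Set.range b).ncard := by rw [hSTB]; exact hBpos
        omega
      · have hbnin : b' ∉ Rset PB QB S T := by
          intro hx
          exact hin ⟨hbP.symm.trans hx.1, hbQ.symm.trans hx.2⟩
        rw [Set.diff_singleton_eq_self (fun hx => hin hx.1),
            Set.diff_singleton_eq_self (fun hx => hbnin hx.1)]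
        have := hcnt S T
        omega

/-- Main EF-style lemma. -/
lemma key_lemma {A B : Type} [Fintype A] [Fintype B]
    (PA QA : Set A) (PB QB : Set B) :
    ∀ {n : ℕ} (φ : Lpq.BoundedFormula Empty n) (k : ℕ), qrank φ ≤ k →
    ∀ (a : Fin n → A) (b : Fin n → B),
    (∀ i j, a i = a j ↔ b i = b j) →
    (∀ i, (a i ∈ PA ↔ b i ∈ PB) ∧ (a i ∈ QA ↔ b i ∈ QB)) →
    (∀ S T : Prop, min ((Rset PA QA S T \ Set.range a).ncard) k
      = min ((Rset PB QB S T \ Set.range b).ncard) k) →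
    (@BoundedFormula.Realize Lpq A (pqStructure PA QA) Empty n φ Empty.elim a ↔
     @BoundedFormula.Realize Lpq B (pqStructure PB QB) Empty n φ Empty.elim b) := by
  intro n φ
  induction φ with
  | falsum => intro k _ a b _ _ _; simp [BoundedFormula.Realize]
  | equal t₁ t₂ =>
      intro k _ a b hpat _ _
      simp only [BoundedFormula.Realize, realize_termVar]
      cases h1 : termVar t₁ with
      | inl e => exact e.elim
      | inr i =>
        cases h2 : termVar t₂ with
        | inl e => exact e.elim
        | inr j => simp [hpat i j]
  | @rel m l R ts =>
      intro k _ a b _ hty _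
      match l, R, ts with
      | 0, R, _ => exact (R : Empty).elim
      | (l+2), R, _ => exact (R : Empty).elim
      | 1, PQSym.p, ts =>
          simp only [BoundedFormula.Realize, realize_termVar]
          show Sum.elim Empty.elim a (termVar (ts 0)) ∈ PA ↔
            Sum.elim Empty.elim b (termVar (ts 0)) ∈ PB
          rcases termVar (ts 0) with e | i
          · exact e.elim
          · exact (hty i).1
      | 1, PQSym.q, ts =>
          simp only [BoundedFormula.Realize, realize_termVar]
          show Sum.elim Empty.elim a (termVar (ts 0)) ∈ QA ↔
            Sum.elim Empty.elim b (termVar (ts 0)) ∈ QB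
          rcases termVar (ts 0) with e | i
          · exact e.elim
          · exact (hty i).2
  | imp f g ihf ihg =>
      intro k hk a b hpat hty hcnt
      simp only [qrank, max_le_iff] at hk
      simp only [BoundedFormula.realize_imp]
      rw [ihf k hk.1 a b hpat hty hcnt, ihg k hk.2 a b hpat hty hcnt]
  | all f ihf =>
      intro k hk a b hpat hty hcnt
      simp only [qrank] at hk
      obtain ⟨k', rfl⟩ : ∃ k', k = k' + 1 := ⟨k - 1, by omega⟩
      have hkf : qrank f ≤ k' := by omega
      simp only [BoundedFormula.realize_all]
      constructor
      · intro h b'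
        obtain ⟨a', hp, ht, hc⟩ := extend_step PB QB PA QA k' _ b a
          (fun i j => (hpat i j).symm) (fun i => ⟨(hty i).1.symm, (hty i).2.symm⟩)
          (fun S T => (hcnt S T).symm) b'
        exact (ihf k' hkf (Fin.snoc a a') (Fin.snoc b b')
          (fun i j => (hp i j).symm) (fun i => ⟨(ht i).1.symm, (ht i).2.symm⟩)
          (fun S T => (hc S T).symm)).mp (h a')
      · intro h a'
        obtain ⟨b', hp, ht, hc⟩ := extend_step PA QA PB QB k' _ a b hpat hty hcnt a'
        exact (ihf k' hkf (Fin.snoc a a') (Fin.snoc b b') hp ht hc).mpr (h b')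

end Aux

/-- **Threshold indistinguishability for monadic FO with two unary predicates.**
Let `𝔄` (domain `A`, interpretations `PA`, `QA`) and `𝔅` (domain `B`,
interpretations `PB`, `QB`) be finite nonempty structures.  If for some `r` the
cardinalities of the four atomic-type regions `p∧q`, `p∧¬q`, `¬p∧q`, `¬p∧¬q` agree
up to threshold `r`, then `𝔄` and `𝔅` satisfy the same sentences of quantifier
rank at most `r`. -/
theorem threshold_indistinguishability
    {A B : Type} [Fintype A] [Fintype B] [Nonempty A] [Nonempty B]
    (PA QA : Set A) (PB QB : Set B) (r : ℕ)
    (h₁ : min {a | a ∈ PA ∧ a ∈ QA}.ncard r = min {b | b ∈ PB ∧ b ∈ QB}.ncard r)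
    (h₂ : min {a | a ∈ PA ∧ a ∉ QA}.ncard r = min {b | b ∈ PB ∧ b ∉ QB}.ncard r)
    (h₃ : min {a | a ∉ PA ∧ a ∈ QA}.ncard r = min {b | b ∉ PB ∧ b ∈ QB}.ncard r)
    (h₄ : min {a | a ∉ PA ∧ a ∉ QA}.ncard r = min {b | b ∉ PB ∧ b ∉ QB}.ncard r) :
    ∀ φ : Lpq.Sentence, qrank φ ≤ r →
      (@Sentence.Realize Lpq A (pqStructure PA QA) φ ↔
        @Sentence.Realize Lpq B (pqStructure PB QB) φ) := by
  intro φ hφ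
  have e0A : Set.range (Fin.elim0 : Fin 0 → A) = ∅ := Set.range_eq_empty _
  have e0B : Set.range (Fin.elim0 : Fin 0 → B) = ∅ := Set.range_eq_empty _
  have hbase : ∀ S T : Prop,
      min ((Rset PA QA S T \ Set.range (Fin.elim0 : Fin 0 → A)).ncard) r
        = min ((Rset PB QB S T \ Set.range (Fin.elim0 : Fin 0 → B)).ncard) r := by
    intro S T
    rw [e0A, e0B, Set.diff_empty, Set.diff_empty]
    by_cases hS : S <;> by_cases hT : T
    · have hA : Rset PA QA S T = {a | a ∈ PA ∧ a ∈ QA} := by ext x; simp [Rset, hS, hT]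
      have hB : Rset PB QB S T = {b | b ∈ PB ∧ b ∈ QB} := by ext x; simp [Rset, hS, hT]
      rw [hA, hB]; exact h₁
    · have hA : Rset PA QA S T = {a | a ∈ PA ∧ a ∉ QA} := by ext x; simp [Rset, hS, hT]
      have hB : Rset PB QB S T = {b | b ∈ PB ∧ b ∉ QB} := by ext x; simp [Rset, hS, hT]
      rw [hA, hB]; exact h₂
    · have hA : Rset PA QA S T = {a | a ∉ PA ∧ a ∈ QA} := by ext x; simp [Rset, hS, hT]
      have hB : Rset PB QB S T = {b | b ∉ PB ∧ b ∈ QB} := by ext x; simp [Rset, hS, hT]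
      rw [hA, hB]; exact h₃
    · have hA : Rset PA QA S T = {a | a ∉ PA ∧ a ∉ QA} := by ext x; simp [Rset, hS, hT]
      have hB : Rset PB QB S T = {b | b ∉ PB ∧ b ∉ QB} := by ext x; simp [Rset, hS, hT]
      rw [hA, hB]; exact h₄
  have key := key_lemma PA QA PB QB φ r hφ Fin.elim0 Fin.elim0
    (fun i _ => i.elim0) (fun i => i.elim0) hbase
  have edA : (default : Empty → A) = Empty.elim := funext fun e => e.elim
  have edB : (default : Empty → B) = Empty.elim := funext fun e => e.elim
  have efA : (default : Fin 0 → A) = Fin.elim0 := funext fun i => i.elim0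
  have efB : (default : Fin 0 → B) = Fin.elim0 := funext fun i => i.elim0
  unfold Sentence.Realize Formula.Realize
  rw [edA, edB, efA, efB]
  exact key
end
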